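/- For every n ≥ 3, the star graph K_{1,n−1} satisfies IC(K_{1,n−1}) = 3. -/

import Mathlib

namespace ICNL

variable {V : Type*}

/-- `S` is a dominating set of `G`. -/
def Dominating (G : SimpleGraph V) (S : Set V) : Prop :=
  ∀ v : V, v ∈ S ∨ ∃ u ∈ S, G.Adj u v

/-- `S` is an independent set of `G`. -/
def IndepSet (G : SimpleGraph V) (S : Set V) : Prop :=
  ∀ ⦃u : V⦄, u ∈ S → ∀ ⦃v : V⦄, v ∈ S → ¬ G.Adj u v

/-- `S` is an independent dominating set of `G`. -/
def IndepDom (G : SimpleGraph V) (S : Set V) : Prop :=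
  IndepSet G S ∧ Dominating G S

/-- `A` and `B` form an independent coalition in `G`. -/
def ICCoalition (G : SimpleGraph V) (A B : Set V) : Prop :=
  Disjoint A B ∧ IndepSet G A ∧ IndepSet G B ∧
    ¬ IndepDom G A ∧ ¬ IndepDom G B ∧ IndepDom G (A ∪ B)

/-- `π` is a partition of the vertex set into nonempty classes. -/
def IsPartition (π : Finset (Finset V)) : Prop :=
  (∀ A ∈ π, A.Nonempty) ∧ ∀ v : V, ∃! A : Finset V, A ∈ π ∧ v ∈ A

/-- `π` is an independent coalition partition of `G`. -/
def IsICPartition (G : SimpleGraph V) (π : Finset (Finset V)) : Prop :=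
  IsPartition π ∧
    ∀ A ∈ π, (∃ v : V, (A : Set V) = {v} ∧ Dominating G (A : Set V)) ∨
      (¬ IndepDom G (A : Set V) ∧
        ∃ B ∈ π, B ≠ A ∧ ICCoalition G (A : Set V) (B : Set V))

/-- The independent coalition number: the maximum number of classes of an
ic-partition of `G`. -/
noncomputable def IC (G : SimpleGraph V) : ℕ :=
  sSup {k | ∃ π : Finset (Finset V), IsICPartition G π ∧ π.card = k}


/-- The star graph `K_{1,n-1}` on `n` vertices: the vertex `0` is the center,
adjacent to the `n - 1` leaves, and there are no other edges. -/
def starGraph (n : ℕ) : SimpleGraph (Fin n) :=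
  SimpleGraph.fromRel (fun u _ => (u : ℕ) = 0)

theorem stmt_6 (n : ℕ) (hn : 3 ≤ n) : IC (starGraph n) = 3 := by
  have hn0 : 0 < n := by omega
  have adj : ∀ u v : Fin n, (starGraph n).Adj u v ↔ u ≠ v ∧ ((u:ℕ) = 0 ∨ (v:ℕ) = 0) := by
    intro u v
    simp only [starGraph, SimpleGraph.fromRel_adj]
  set z : Fin n := ⟨0, hn0⟩ with hzdef
  set o : Fin n := ⟨1, by omega⟩ with hodef
  set t : Fin n := ⟨2, by omega⟩ with htdef
  have hval : ∀ u : Fin n, (u:ℕ) = 0 ↔ u = z := by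
    intro u; rw [Fin.ext_iff]
  have hoz : o ≠ z := by simp [Fin.ext_iff]
  have htz : t ≠ z := by simp [Fin.ext_iff]
  have hto : t ≠ o := by simp [Fin.ext_iff, htdef, hodef]
  -- basic adjacency facts
  have adjz : ∀ v : Fin n, v ≠ z → (starGraph n).Adj z v := by
    intro v hv
    rw [adj]; exact ⟨fun h => hv h.symm, Or.inl rfl⟩
  have adjz' : ∀ v : Fin n, v ≠ z → (starGraph n).Adj v z := by
    intro v hv
    rw [adj]; exact ⟨hv, Or.inr rfl⟩
  have noadj : ∀ u v : Fin n, u ≠ z → v ≠ z → ¬ (starGraph n).Adj u v := by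
    intro u v hu hv hadj
    rw [adj] at hadj
    rcases hadj.2 with h | h
    · exact hu ((hval u).1 h)
    · exact hv ((hval v).1 h)
  -- {z} is dominating
  have domz : Dominating (starGraph n) {z} := by
    intro v
    by_cases hv : v = z
    · exact Or.inl (by simp [hv])
    · exact Or.inr ⟨z, rfl, adjz v hv⟩
  have indepz : IndepSet (starGraph n) {z} := by
    intro u hu v hv
    simp only [Set.mem_singleton_iff] at hu hv
    subst hu; subst hv
    exact (starGraph n).irrefl
  have idomz : IndepDom (starGraph n) {z} := ⟨indepz, domz⟩
  -- any set of leaves is independent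
  have leaf_indep : ∀ S : Set (Fin n), z ∉ S → IndepSet (starGraph n) S := by
    intro S hzS u hu v hv
    exact noadj u v (fun h => hzS (h ▸ hu)) (fun h => hzS (h ▸ hv))
  -- a leaf set missing a leaf is not dominating
  have leaf_notdom : ∀ (S : Set (Fin n)) (w : Fin n), z ∉ S → w ≠ z → w ∉ S →
      ¬ Dominating (starGraph n) S := by
    intro S w hzS hwz hwS hdom
    rcases hdom w with h | ⟨u, huS, hadj⟩
    · exact hwS h
    · exact noadj u w (fun h => hzS (h ▸ huS)) hwz hadj
  -- the set of all leaves is dominating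
  have leaves_dom : ∀ S : Set (Fin n), (∀ w : Fin n, w ≠ z → w ∈ S) →
      Dominating (starGraph n) S := by
    intro S hS v
    by_cases hv : v = z
    · exact Or.inr ⟨o, hS o hoz, hv ▸ adjz' o hoz⟩
    · exact Or.inl (hS v hv)
  -- ===== lower bound: a 3-class ic-partition =====
  set R : Finset (Fin n) := Finset.univ \ {z, o} with hRdef
  have hmemR : ∀ v : Fin n, v ∈ R ↔ v ≠ z ∧ v ≠ o := by
    intro v; simp [hRdef]
  have htR : t ∈ R := (hmemR t).2 ⟨htz, hto⟩
  have hzR : z ∉ R := fun h => ((hmemR z).1 h).1 rfl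
  have hoR : o ∉ R := fun h => ((hmemR o).1 h).2 rfl
  set π₀ : Finset (Finset (Fin n)) := {{z}, {o}, R} with hπ₀def
  have hne1 : ({z} : Finset (Fin n)) ≠ {o} := by
    intro h
    exact hoz (Finset.singleton_injective h).symm
  have hne2 : ({z} : Finset (Fin n)) ≠ R := by
    intro h; exact hzR (h ▸ Finset.mem_singleton_self z)
  have hne3 : ({o} : Finset (Fin n)) ≠ R := by
    intro h; exact hoR (h ▸ Finset.mem_singleton_self o)
  have hcardπ₀ : π₀.card = 3 := by
    rw [hπ₀def]
    rw [Finset.card_insert_of_notMem (by simp [hne1, hne2]),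
        Finset.card_insert_of_notMem (by simp [hne3])]
    simp
  -- the coalition between {o} and R
  have hcoalOR : ICCoalition (starGraph n) (↑({o} : Finset (Fin n))) (↑R) := by
    refine ⟨?_, ?_, ?_, ?_, ?_, ?_, ?_⟩
    · rw [Finset.coe_singleton, Set.disjoint_singleton_left]
      exact_mod_cast hoR
    · exact leaf_indep _ (by simp [hoz.symm])
    · exact leaf_indep _ (by exact_mod_cast hzR)
    · intro h
      exact leaf_notdom _ t (by simp [hoz.symm]) htz (by simp [hto]) h.2
    · intro h
      exact leaf_notdom _ o (by exact_mod_cast hzR) hoz (by exact_mod_cast hoR) h.2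
    · refine leaf_indep _ ?_
      intro h
      rcases h with h | h
      · have hh : z = o := by simpa using h
        exact hoz hh.symm
      · exact hzR (by exact_mod_cast h)
    · refine leaves_dom _ ?_
      intro w hw
      by_cases hwo : w = o
      · exact Or.inl (by simp [hwo])
      · exact Or.inr (by exact_mod_cast (hmemR w).2 ⟨hw, hwo⟩)
  have hICπ₀ : IsICPartition (starGraph n) π₀ := by
    constructor
    · constructor
      · intro A hA
        rw [hπ₀def] at hA
        simp only [Finset.mem_insert, Finset.mem_singleton] at hA
        rcases hA with rfl | rfl | rfl
        · exact ⟨z, Finset.mem_singleton_self z⟩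
        · exact ⟨o, Finset.mem_singleton_self o⟩
        · exact ⟨t, htR⟩
      · intro v
        by_cases hvz : v = z
        · refine ⟨{z}, ⟨by simp [hπ₀def], by simp [hvz]⟩, ?_⟩
          rintro A ⟨hA, hvA⟩
          rw [hπ₀def] at hA
          simp only [Finset.mem_insert, Finset.mem_singleton] at hA
          rcases hA with rfl | rfl | rfl
          · rfl
          · exact absurd (Finset.mem_singleton.1 hvA) (hvz ▸ hoz.symm)
          · exact absurd ((hmemR v).1 hvA).1 (by simp [hvz])
        · by_cases hvo : v = o
          · refine ⟨{o}, ⟨by simp [hπ₀def], by simp [hvo]⟩, ?_⟩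
            rintro A ⟨hA, hvA⟩
            rw [hπ₀def] at hA
            simp only [Finset.mem_insert, Finset.mem_singleton] at hA
            rcases hA with rfl | rfl | rfl
            · exact absurd (Finset.mem_singleton.1 hvA) hvz
            · rfl
            · exact absurd ((hmemR v).1 hvA).2 (by simp [hvo])
          · refine ⟨R, ⟨by simp [hπ₀def], (hmemR v).2 ⟨hvz, hvo⟩⟩, ?_⟩
            rintro A ⟨hA, hvA⟩
            rw [hπ₀def] at hA
            simp only [Finset.mem_insert, Finset.mem_singleton] at hA
            rcases hA with rfl | rfl | rfl
            · exact absurd (Finset.mem_singleton.1 hvA) hvz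
            · exact absurd (Finset.mem_singleton.1 hvA) hvo
            · rfl
    · intro A hA
      rw [hπ₀def] at hA
      simp only [Finset.mem_insert, Finset.mem_singleton] at hA
      rcases hA with rfl | rfl | rfl
      · exact Or.inl ⟨z, by simp, by simpa using domz⟩
      · refine Or.inr ⟨hcoalOR.2.2.2.1, R, by simp [hπ₀def], Ne.symm hne3, hcoalOR⟩
      · refine Or.inr ⟨hcoalOR.2.2.2.2.1, {o}, by simp [hπ₀def], hne3, ?_⟩
        exact ⟨hcoalOR.1.symm, hcoalOR.2.2.1, hcoalOR.2.1, hcoalOR.2.2.2.2.1,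
          hcoalOR.2.2.2.1, Set.union_comm _ _ ▸ hcoalOR.2.2.2.2.2⟩
  have h3mem : 3 ∈ {k | ∃ π : Finset (Finset (Fin n)),
      IsICPartition (starGraph n) π ∧ π.card = k} := ⟨π₀, hICπ₀, hcardπ₀⟩
  -- ===== upper bound =====
  have hub : ∀ k ∈ {k | ∃ π : Finset (Finset (Fin n)),
      IsICPartition (starGraph n) π ∧ π.card = k}, k ≤ 3 := by
    rintro k ⟨π, ⟨⟨hnonempty, huniq⟩, hcl⟩, rfl⟩
    obtain ⟨A₀, ⟨hA₀π, hzA₀⟩, hA₀u⟩ := huniq z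
    -- the class of z is {z}
    have hA₀ : (A₀ : Set (Fin n)) = {z} := by
      rcases hcl A₀ hA₀π with ⟨v, hv, -⟩ | ⟨hnid, -⟩
      · have : z ∈ (A₀ : Set (Fin n)) := hzA₀
        rw [hv, Set.mem_singleton_iff] at this
        rw [hv, this]
      · exfalso
        have hindep : IndepSet (starGraph n) (A₀ : Set (Fin n)) := by
          rcases hcl A₀ hA₀π with ⟨v, hv, -⟩ | ⟨-, B, -, -, hc⟩
          · intro u hu w hw
            rw [hv, Set.mem_singleton_iff] at hu hw
            subst hu; subst hw; exact (starGraph n).irrefl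
          · exact hc.2.1
        have heq : (A₀ : Set (Fin n)) = {z} := by
          apply Set.eq_singleton_iff_unique_mem.2
          refine ⟨hzA₀, fun w hw => ?_⟩
          by_contra hwz
          exact hindep hzA₀ hw (adjz w hwz)
        exact hnid (heq ▸ idomz)
    -- no class other than A₀ contains z
    have hzonly : ∀ A ∈ π, A ≠ A₀ → z ∉ A := by
      intro A hA hAne hzA
      exact hAne (hA₀u A ⟨hA, hzA⟩)
    -- every class ≠ A₀ has a leaf partner covering all leaves
    have hpartner : ∀ A ∈ π, A ≠ A₀ →
        ∃ B ∈ π, B ≠ A ∧ B ≠ A₀ ∧ ∀ w : Fin n, w ≠ z → w ∈ A ∨ w ∈ B := by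
      intro A hA hAne
      have hzA : z ∉ A := hzonly A hA hAne
      rcases hcl A hA with ⟨v, hv, hdom⟩ | ⟨-, B, hB, hBA, hc⟩
      · exfalso
        have hvA : v ∈ (A : Set (Fin n)) := hv ▸ rfl
        have hvz : v ≠ z := fun h => hzA (by exact_mod_cast h ▸ hvA)
        obtain ⟨w, hwz, hwv⟩ : ∃ w : Fin n, w ≠ z ∧ w ≠ v := by
          by_cases hvo : v = o
          · exact ⟨t, htz, hvo ▸ hto⟩
          · exact ⟨o, hoz, fun h => hvo h.symm⟩
        rcases hdom w with h | ⟨u, hu, hadj⟩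
        · rw [hv, Set.mem_singleton_iff] at h; exact hwv h
        · rw [hv, Set.mem_singleton_iff] at hu
          exact noadj u w (hu ▸ hvz) hwz hadj
      · have hBA₀ : B ≠ A₀ := by
          intro h
          have : IndepDom (starGraph n) (B : Set (Fin n)) := by
            rw [h, hA₀]; exact idomz
          exact hc.2.2.2.2.1 this
        refine ⟨B, hB, hBA, hBA₀, ?_⟩
        intro w hwz
        have hzB : z ∉ B := hzonly B hB hBA₀
        have hdom := hc.2.2.2.2.2.2
        rcases hdom w with h | ⟨u, hu, hadj⟩
        · simpa using h
        · exfalso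
          have huz : u ≠ z := by
            rintro rfl
            rcases hu with h | h
            · exact hzA (by exact_mod_cast h)
            · exact hzB (by exact_mod_cast h)
          exact noadj u w huz hwz hadj
    -- conclude card ≤ 3
    by_cases hex : ∃ A ∈ π, A ≠ A₀
    · obtain ⟨A, hA, hAne⟩ := hex
      obtain ⟨B, hB, hBA, hBA₀, hcover⟩ := hpartner A hA hAne
      have hsub : π ⊆ {A₀, A, B} := by
        intro C hC
        simp only [Finset.mem_insert, Finset.mem_singleton]
        by_contra hCne
        push_neg at hCne
        obtain ⟨hC0, hC1, hC2⟩ := hCne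
        obtain ⟨w, hwC⟩ := hnonempty C hC
        have hwz : w ≠ z := by
          rintro rfl
          exact hC0 (hA₀u C ⟨hC, hwC⟩)
        obtain ⟨Cw, -, hCwu⟩ := huniq w
        rcases hcover w hwz with h | h
        · exact hC1 ((hCwu C ⟨hC, hwC⟩).trans (hCwu A ⟨hA, h⟩).symm)
        · exact hC2 ((hCwu C ⟨hC, hwC⟩).trans (hCwu B ⟨hB, h⟩).symm)
      calc π.card ≤ ({A₀, A, B} : Finset (Finset (Fin n))).card := Finset.card_le_card hsub
        _ ≤ 3 := by
          apply le_trans (Finset.card_insert_le _ _)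
          have h1 := Finset.card_insert_le A ({B} : Finset (Finset (Fin n)))
          have h2 : ({B} : Finset (Finset (Fin n))).card = 1 := Finset.card_singleton B
          omega
    · push_neg at hex
      have hsub : π ⊆ {A₀} := fun C hC => Finset.mem_singleton.2 (hex C hC)
      calc π.card ≤ ({A₀} : Finset (Finset (Fin n))).card := Finset.card_le_card hsub
        _ ≤ 3 := by simp
  -- combine
  have hbdd : BddAbove {k | ∃ π : Finset (Finset (Fin n)),
      IsICPartition (starGraph n) π ∧ π.card = k} := ⟨3, hub⟩
  exact le_antisymm (csSup_le ⟨3, h3mem⟩ hub) (le_csSup hbdd h3mem)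

end ICNL
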